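/- Let A, B, A', B' be nonempty finite types and let (E_k)_{k∈K} be a finite family of complex matrices with rows indexed by A' × B' and columns indexed by A × B; write E(τ) := ∑_{k∈K} E_k · τ · E_kᴴ for the associated completely positive map. Let σ be a PSD matrix indexed by B and σ̃ a PSD matrix indexed by B' such that (id_{A'} ⊗ σ̃) − E(id_A ⊗ σ) is PSD. Then for every PSD matrix ρ indexed by A × B and every λ ≥ 0 such that λ·(id_A ⊗ σ) − ρ is PSD, the matrix λ·(id_{A'} ⊗ σ̃) − E(ρ) is PSD. (Quantum operations can only increase min-entropy: H_min(E(ρ)|σ̃) ≥ H_min(ρ|σ).) -/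

import Mathlib

open Matrix Kronecker
open scoped ComplexOrder


lemma psd_real_smul {n : Type*} [Fintype n] {M : Matrix n n ℂ} (hM : M.PosSemidef)
    {l : ℝ} (hl : 0 ≤ l) : (l • M).PosSemidef := by
  constructor
  · unfold Matrix.IsHermitian
    rw [Matrix.conjTranspose_smul, hM.1.eq, star_trivial]
  · intro x
    have := hM.2 x
    simpa [Finsupp.mul_sum, mul_assoc, mul_left_comm _ (l : ℂ)] using smul_nonneg hl this

/-- Quantum operations can only increase min-entropy: for a completely positive map
`E(τ) = ∑ₖ Eₖ τ Eₖᴴ` with `(id_{A'} ⊗ σ̃) − E(id_A ⊗ σ)` PSD, if `λ·(id_A ⊗ σ) − ρ`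
is PSD then `λ·(id_{A'} ⊗ σ̃) − E(ρ)` is PSD. -/
theorem cpm_increases_min_entropy
    {A B A' B' K : Type*} [Fintype A] [Fintype B] [Fintype A'] [Fintype B'] [Fintype K]
    [DecidableEq A] [DecidableEq B] [DecidableEq A'] [DecidableEq B']
    [Nonempty A] [Nonempty B] [Nonempty A'] [Nonempty B']
    (E : K → Matrix (A' × B') (A × B) ℂ)
    (σ : Matrix B B ℂ) (hσ : σ.PosSemidef)
    (σt : Matrix B' B' ℂ) (hσt : σt.PosSemidef)
    (hdom : ((1 : Matrix A' A' ℂ) ⊗ₖ σt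
        - ∑ k : K, E k * ((1 : Matrix A A ℂ) ⊗ₖ σ) * (E k)ᴴ).PosSemidef)
    (ρ : Matrix (A × B) (A × B) ℂ) (hρ : ρ.PosSemidef)
    (l : ℝ) (hl : 0 ≤ l)
    (h : (l • ((1 : Matrix A A ℂ) ⊗ₖ σ) - ρ).PosSemidef) :
    (l • ((1 : Matrix A' A' ℂ) ⊗ₖ σt) - ∑ k : K, E k * ρ * (E k)ᴴ).PosSemidef := by
  have key : (l • ((1 : Matrix A' A' ℂ) ⊗ₖ σt) - ∑ k : K, E k * ρ * (E k)ᴴ)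
      = l • ((1 : Matrix A' A' ℂ) ⊗ₖ σt
        - ∑ k : K, E k * ((1 : Matrix A A ℂ) ⊗ₖ σ) * (E k)ᴴ)
      + ∑ k : K, E k * (l • ((1 : Matrix A A ℂ) ⊗ₖ σ) - ρ) * (E k)ᴴ := by
    simp only [Matrix.mul_sub, Matrix.sub_mul, Finset.sum_sub_distrib, smul_sub,
      Matrix.mul_smul, Matrix.smul_mul, ← Finset.smul_sum]
    abel
  rw [key]
  refine PosSemidef.add (psd_real_smul hdom hl) (Finset.sum_induction _ _ (fun a b ha hb => ha.add hb)
    (Matrix.PosSemidef.zero) (fun k _ => h.mul_mul_conjTranspose_same (E k)))
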